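/- Let N ≥ 1 and let T = [[M, M],[B, M]] with M the N×N all-ones matrix and B an N×N 0-1 matrix with exactly k ones, 0 ≤ k ≤ N². Then the product of (λ − N − √k)(λ − N + √k)·λ^{2N−2} equals the characteristic polynomial of T; equivalently, det(λI − T) = λ^{2N−2}(λ² − 2Nλ + N² − k) for all λ. -/

import Mathlib

open Matrix in
/-- `det(λI − T) = λ^(2N−2) (λ² − 2Nλ + N² − k)` for
`T = [[M,M],[B,M]]` with `B` a 0-1 matrix with exactly `k` ones. -/
theorem stmt14 (N : ℕ) (hN : 1 ≤ N) (k : ℕ) (hk : k ≤ N ^ 2)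
    (B : Matrix (Fin N) (Fin N) ℝ)
    (hB01 : ∀ i j, B i j = 0 ∨ B i j = 1)
    (hBk : ∑ i, ∑ j, B i j = (k : ℝ)) :
    let M : Matrix (Fin N) (Fin N) ℝ := fun _ _ => 1
    let T : Matrix (Fin N ⊕ Fin N) (Fin N ⊕ Fin N) ℝ := Matrix.fromBlocks M M B M
    ∀ lam : ℝ, (lam • (1 : Matrix (Fin N ⊕ Fin N) (Fin N ⊕ Fin N) ℝ) - T).det =
      lam ^ (2 * N - 2) * (lam ^ 2 - 2 * N * lam + ((N : ℝ) ^ 2 - k)) := by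
  intro M T
  have hfun : (fun lam : ℝ => (lam • (1 : Matrix (Fin N ⊕ Fin N) (Fin N ⊕ Fin N) ℝ) - T).det)
      = fun lam : ℝ => lam ^ (2 * N - 2) * (lam ^ 2 - 2 * N * lam + ((N : ℝ) ^ 2 - k)) := by
    apply Continuous.ext_on (dense_compl_singleton (0:ℝ))
    · exact Continuous.matrix_det (by continuity)
    · continuity
    intro l hl
    have hl : l ≠ 0 := hl
    show (l • (1 : Matrix (Fin N ⊕ Fin N) (Fin N ⊕ Fin N) ℝ) - T).det
      = l ^ (2 * N - 2) * (l ^ 2 - 2 * N * l + ((N : ℝ) ^ 2 - k))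
    -- setup
    set C : Matrix (Fin N ⊕ Fin N) (Fin N ⊕ Fin N) ℝ := fromBlocks 0 0 (B - M) 0 with hCdef
    have hC2 : C * C = 0 := by
      simp [hCdef, fromBlocks_multiply, ← fromBlocks_zero]
    set A := l • (1 : Matrix (Fin N ⊕ Fin N) (Fin N ⊕ Fin N) ℝ) - C with hAdef
    set A' := l⁻¹ • (1 : Matrix (Fin N ⊕ Fin N) (Fin N ⊕ Fin N) ℝ) + (l^2)⁻¹ • C with hA'def
    have hAA' : A * A' = 1 := by
      rw [hAdef, hA'def]
      have h2 : l * (l^2)⁻¹ = l⁻¹ := by field_simp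
      simp only [Matrix.sub_mul, Matrix.mul_add, Matrix.add_mul, Matrix.mul_smul,
        Matrix.smul_mul, smul_smul, hC2, Matrix.one_mul, Matrix.mul_one,
        mul_inv_cancel₀ hl, h2, one_smul, smul_zero]
      match_scalars <;> field_simp <;> ring
    set U := Matrix.replicateCol (Fin 1) (fun _ : Fin N ⊕ Fin N => (1:ℝ)) with hU
    set V := Matrix.replicateRow (Fin 1) (fun _ : Fin N ⊕ Fin N => (1:ℝ)) with hV
    have hM : ∀ i j, M i j = 1 := fun _ _ => rfl
    have hT : l • (1 : Matrix (Fin N ⊕ Fin N) (Fin N ⊕ Fin N) ℝ) - T = A - U * V := by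
      ext i j
      have huv : (U * V) i j = 1 := by simp [hU, hV, Matrix.mul_apply]
      rcases i with i | i <;> rcases j with j | j <;>
        simp [hAdef, hCdef, T, hM, huv, Matrix.one_apply, Matrix.fromBlocks] <;> ring
    have hAdet : A.det = l ^ (2 * N) := by
      have h1 : A = fromBlocks (l • 1) 0 (-(B - M)) (l • 1) := by
        rw [hAdef, hCdef, ← fromBlocks_one, fromBlocks_smul]
        ext i j
        rcases i with i | i <;> rcases j with j | j <;>
          simp [Matrix.fromBlocks]
      rw [h1, Matrix.det_fromBlocks_zero₁₂, Matrix.det_smul, Matrix.det_one]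
      rw [Fintype.card_fin]
      ring
    -- determinant lemma
    have hfac : A - U * V = A * (1 - A' * (U * V)) := by
      rw [Matrix.mul_sub, Matrix.mul_one, ← Matrix.mul_assoc, hAA', Matrix.one_mul]
    have hsum : (V * (A' * U)) 0 0 = 2 * N * l⁻¹ + ((k:ℝ) - N^2) * (l^2)⁻¹ := by
      have hCsum : ∑ i, ∑ j, C i j = (k:ℝ) - N^2 := by
        simp [hCdef, Fintype.sum_sum_type, Matrix.fromBlocks, Matrix.sub_apply,
          Finset.sum_sub_distrib, hBk, hM]
        push_cast
        ring
      have h1sum : ∑ i : Fin N ⊕ Fin N, ∑ j, (1 : Matrix (Fin N ⊕ Fin N) (Fin N ⊕ Fin N) ℝ) i j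
          = 2 * N := by
        simp [Matrix.one_apply, Finset.sum_ite_eq, Fintype.sum_sum_type]
        ring
      have : (V * (A' * U)) 0 0 = ∑ i, ∑ j, A' i j := by
        simp [hV, hU, Matrix.mul_apply]
      have expand : ∑ i, ∑ j, A' i j
          = l⁻¹ * (∑ i : Fin N ⊕ Fin N, ∑ j, (1 : Matrix (Fin N ⊕ Fin N) (Fin N ⊕ Fin N) ℝ) i j)
            + (l^2)⁻¹ * (∑ i, ∑ j, C i j) := by
        rw [hA'def]
        simp only [Matrix.add_apply, Matrix.smul_apply, smul_eq_mul, Finset.sum_add_distrib,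
          Finset.mul_sum]
      rw [this, expand, h1sum, hCsum]
      ring
    have h11 : (1 - V * (A' * U)).det = 1 - (V * (A' * U)) 0 0 := by
      rw [Matrix.det_fin_one]
      simp
    rw [hT, hfac, Matrix.det_mul, hAdet, ← Matrix.mul_assoc,
      Matrix.det_one_sub_mul_comm, h11, hsum]
    have hpow : l ^ (2 * N) = l ^ (2 * N - 2) * l ^ 2 := by
      rw [← pow_add]; congr 1; omega
    rw [hpow]
    field_simp
    ring
  intro lam
  exact congrFun hfun lam
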